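/- arXiv:1611.06823 — 2 statements merged into one kernel-verified Lean document; each statement's English description precedes it below -/
import Mathlib

section
/- Let f₁, f₂ : ℝⁿ → ℝ be simple and convex functions. Then for each q ∈ ℝⁿ the function v ↦ f₁(v) + f₂(q−v) attains its infimum, uniquely, at the point v_q characterized by ∇f₁(v_q) = ∇f₂(q − v_q); the infimal-convolution f₁ □ f₂ (q) := inf_{v ∈ ℝⁿ} (f₁(v) + f₂(q−v)) is a finite-valued simple and convex function, and the convolution of the 1-graphs equals the 1-graph of the infimal-convolution: (j¹f₁) □̲ (j¹f₂) = j¹(f₁ □ f₂). -/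
noncomputable section

/-- The 1-graph j¹f = {(f(q), q, ∇f(q)) | q ∈ ℝⁿ}. -/
def oneJetGraph {n : ℕ} (f : EuclideanSpace ℝ (Fin n) → ℝ) :
    Set (ℝ × EuclideanSpace ℝ (Fin n) × EuclideanSpace ℝ (Fin n)) :=
  {x | ∃ q, x = (f q, q, gradient f q)}

/-- The convolution L₁ □̲ L₂ = {(u₁+u₂, q₁+q₂, p) | (u₁,q₁,p) ∈ L₁, (u₂,q₂,p) ∈ L₂}. -/
def LegConv {E : Type*} [AddCommGroup E] (L₁ L₂ : Set (ℝ × E × E)) : Set (ℝ × E × E) :=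
  {x | ∃ u₁ q₁ u₂ q₂ p, (u₁, q₁, p) ∈ L₁ ∧ (u₂, q₂, p) ∈ L₂ ∧
    x = (u₁ + u₂, q₁ + q₂, p)}

/-- g : X → X is a diffeomorphism: a smooth bijection with smooth inverse. -/
def IsDiffeo {X : Type*} [NormedAddCommGroup X] [NormedSpace ℝ X] (g : X → X) : Prop :=
  ∃ e : X ≃ X, ⇑e = g ∧ ContDiff ℝ (⊤ : ℕ∞) ⇑e ∧ ContDiff ℝ (⊤ : ℕ∞) ⇑e.symm

open Set InnerProductSpace Topology Filter
noncomputable section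
open scoped RealInnerProductSpace

variable {E : Type*} [NormedAddCommGroup E] [InnerProductSpace ℝ E] [CompleteSpace E]

lemma inner_gradient_eq (f : E → ℝ) (x h : E) : ⟪gradient f x, h⟫_ℝ = fderiv ℝ f x h := by
  simp [gradient, InnerProductSpace.toDual_symm_apply]

lemma subgradient {f : E → ℝ} (hconv : ConvexOn ℝ univ f) (hd : Differentiable ℝ f) (x y : E) :
    f x + ⟪gradient f x, y - x⟫_ℝ ≤ f y := by
  have hline : HasDerivAt (fun t : ℝ => x + t • (y - x)) (y - x) 0 := by
    simpa using ((hasDerivAt_id (0:ℝ)).smul_const (y - x)).const_add x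
  have hcomp : HasDerivAt (fun t : ℝ => f (x + t • (y - x))) (fderiv ℝ f x (y - x)) 0 := by
    have hfd : HasFDerivAt f (fderiv ℝ f x) (x + (0:ℝ) • (y - x)) := by
      simpa using (hd x).hasFDerivAt
    exact hfd.comp_hasDerivAt (0:ℝ) hline
  have hconv' : ConvexOn ℝ univ (fun t : ℝ => f (x + t • (y - x))) := by
    have := hconv.comp_affineMap (AffineMap.lineMap x y)
    simp only [Set.preimage_univ] at this
    have he : (fun t : ℝ => f (x + t • (y - x))) = f ∘ ⇑(AffineMap.lineMap x y) := by
      funext t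
      simp [AffineMap.lineMap_apply, add_comm]
    rw [he]
    exact this
  have := hconv'.le_slope_of_hasDerivAt (mem_univ (0:ℝ)) (mem_univ 1) one_pos hcomp
  rw [slope_def_field] at this
  simp only [one_smul, zero_smul, add_zero, sub_zero, div_one, add_sub_cancel] at this
  rw [inner_gradient_eq]
  linarith

lemma grad_mono {f : E → ℝ} (hconv : ConvexOn ℝ univ f) (hd : Differentiable ℝ f) (x y : E) :
    0 ≤ ⟪gradient f x - gradient f y, x - y⟫_ℝ := by
  have h1 := subgradient hconv hd x y
  have h2 := subgradient hconv hd y x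
  have e1 : ⟪gradient f x, y - x⟫_ℝ = - ⟪gradient f x, x - y⟫_ℝ := by
    rw [← inner_neg_right]; congr 1; abel
  rw [inner_sub_left]
  rw [e1] at h1
  linarith

lemma grad_flat {f : E → ℝ} (hconv : ConvexOn ℝ univ f) (hd : Differentiable ℝ f) {x y : E}
    (h : ⟪gradient f x - gradient f y, x - y⟫_ℝ = 0) : gradient f y = gradient f x := by
  -- the subgradient inequality at x is an equality at y
  have h1 := subgradient hconv hd x y
  have h2 := subgradient hconv hd y x
  have e1 : ⟪gradient f x, y - x⟫_ℝ = - ⟪gradient f x, x - y⟫_ℝ := by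
    rw [← inner_neg_right]; congr 1; abel
  rw [inner_sub_left] at h
  have heq : f y = f x + ⟪gradient f x, y - x⟫_ℝ := by rw [e1]; linarith
  -- G z := f z - f x - ⟪∇f x, z - x⟫ is nonneg with a zero at y
  set c := gradient f x with hc
  set G := fun z => f z - (f x + ⟪c, z - x⟫_ℝ) with hG
  have hGnn : ∀ z, 0 ≤ G z := fun z => by
    have := subgradient hconv hd x z
    show 0 ≤ f z - (f x + ⟪gradient f x, z - x⟫_ℝ)
    linarith
  have hGy : G y = 0 := by simp [hG, heq]
  have hmin : IsLocalMin G y := by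
    apply IsMinOn.isLocalMin _ (Filter.univ_mem)
    intro z _
    rw [hGy]; exact hGnn z
  have hfd : HasFDerivAt G (fderiv ℝ f y - innerSL ℝ c) y := by
    have : HasFDerivAt (fun z => f x + ⟪c, z - x⟫_ℝ) (innerSL ℝ c) y := by
      have : HasFDerivAt (fun z : E => ⟪c, z⟫_ℝ) (innerSL ℝ c) y := (innerSL ℝ c).hasFDerivAt
      simpa [inner_sub_right, add_sub_assoc] using (this.sub_const ⟪c, x⟫_ℝ).const_add (f x)
    exact (hd y).hasFDerivAt.sub this
  have hz := hmin.hasFDerivAt_eq_zero hfd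
  have hfy : fderiv ℝ f y = innerSL ℝ c := sub_eq_zero.mp hz
  have hdc : (innerSL ℝ c : E →L[ℝ] ℝ) = InnerProductSpace.toDual ℝ E c := by
    ext z; simp
  calc gradient f y = (InnerProductSpace.toDual ℝ E).symm (fderiv ℝ f y) := rfl
    _ = c := by rw [hfy, hdc]; simp

open Filter in
lemma exists_min [FiniteDimensional ℝ E] {f₁ f₂ : E → ℝ}
    (h₁ : ConvexOn ℝ univ f₁) (h₂ : ConvexOn ℝ univ f₂)
    (hd₁ : Differentiable ℝ f₁) (hd₂ : Differentiable ℝ f₂)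
    (ψ : E → E) (hψ : ∀ p, gradient f₁ (ψ p) = p) (hψc : Continuous ψ) (q : E) :
    ∃ v, ∀ w, f₁ v + f₂ (q - v) ≤ f₁ w + f₂ (q - w) := by
  set c := gradient f₂ 0 with hc
  set g := fun v => f₁ v + f₂ (q - v) with hg
  have hgc : Continuous g :=
    hd₁.continuous.add (hd₂.continuous.comp (continuous_const.sub continuous_id))
  apply hgc.exists_forall_le' 0
  have hlow : ∀ v, f₁ v - ⟪c, v⟫_ℝ + (f₂ 0 + ⟪c, q⟫_ℝ) ≤ g v := by
    intro v
    have h := subgradient h₂ hd₂ 0 (q - v)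
    simp only [sub_zero] at h
    rw [inner_sub_right] at h
    simp only [hg]
    linarith
  rcases subsingleton_or_nontrivial E with hE | hE
  · filter_upwards with v
    have : v = 0 := Subsingleton.elim v 0
    rw [this]
  · -- max of the conjugate-type quantity on the unit sphere around c
    set F := fun p : E => ⟪p, ψ p⟫_ℝ - f₁ (ψ p) with hF
    have hFc : ContinuousOn F (Metric.sphere c 1) :=
      (Continuous.inner continuous_id hψc).sub (hd₁.continuous.comp hψc) |>.continuousOn
    obtain ⟨p₀, hp₀s, hp₀⟩ := (isCompact_sphere c 1).exists_isMaxOn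
      (NormedSpace.sphere_nonempty.mpr zero_le_one) hFc
    set K := F p₀ with hK
    set r := max 1 (g 0 + K - (f₂ 0 + ⟪c, q⟫_ℝ)) with hr
    filter_upwards [tendsto_norm_cocompact_atTop.eventually_ge_atTop r] with v hv
    have hv1 : (1:ℝ) ≤ ‖v‖ := le_trans (le_max_left _ _) hv
    have hvne : v ≠ 0 := by
      intro h0; rw [h0, norm_zero] at hv1; linarith
    set p := c + ‖v‖⁻¹ • v with hp
    have hps : p ∈ Metric.sphere c 1 := by
      simp [hp, norm_smul, abs_of_pos (by positivity : (0:ℝ) < ‖v‖⁻¹),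
        inv_mul_cancel₀ (norm_ne_zero_iff.mpr hvne)]
    have hsub := subgradient h₁ hd₁ (ψ p) v
    rw [hψ p] at hsub
    -- f₁ (ψ p) + ⟪p, v - ψ p⟫ ≤ f₁ v
    have hinner : ⟪p, v - ψ p⟫_ℝ = ⟪c, v⟫_ℝ + ‖v‖ - ⟪p, ψ p⟫_ℝ := by
      rw [inner_sub_right, hp, inner_add_left, real_inner_smul_left,
        real_inner_self_eq_norm_mul_norm]
      have : ‖v‖⁻¹ * (‖v‖ * ‖v‖) = ‖v‖ := by
        field_simp
      rw [this]
    have hKb : F p ≤ K := hp₀ hps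
    have h1 : ‖v‖ - K + (f₂ 0 + ⟪c, q⟫_ℝ) ≤ g v := by
      have := hlow v
      rw [hinner] at hsub
      simp only [hF] at hKb
      linarith
    have : g 0 ≤ ‖v‖ - K + (f₂ 0 + ⟪c, q⟫_ℝ) := by
      have : g 0 + K - (f₂ 0 + ⟪c, q⟫_ℝ) ≤ ‖v‖ := le_trans (le_max_right _ _) hv
      linarith
    linarith

lemma crit_of_min {f₁ f₂ : E → ℝ} (hd₁ : Differentiable ℝ f₁) (hd₂ : Differentiable ℝ f₂)
    {q v : E} (hmin : ∀ w, f₁ v + f₂ (q - v) ≤ f₁ w + f₂ (q - w)) :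
    gradient f₁ v = gradient f₂ (q - v) := by
  have hsub : HasFDerivAt (fun w : E => q - w) (-(ContinuousLinearMap.id ℝ E)) v :=
    (hasFDerivAt_id v).const_sub q
  have h2 : HasFDerivAt (fun w : E => f₂ (q - w))
      ((fderiv ℝ f₂ (q - v)).comp (-(ContinuousLinearMap.id ℝ E))) v :=
    (hd₂ (q - v)).hasFDerivAt.comp v hsub
  have hg : HasFDerivAt (fun w : E => f₁ w + f₂ (q - w))
      (fderiv ℝ f₁ v + (fderiv ℝ f₂ (q - v)).comp (-(ContinuousLinearMap.id ℝ E))) v :=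
    (hd₁ v).hasFDerivAt.add h2
  have hlm : IsLocalMin (fun w : E => f₁ w + f₂ (q - w)) v :=
    IsMinOn.isLocalMin (fun z _ => hmin z) (Filter.univ_mem)
  have hz := hlm.hasFDerivAt_eq_zero hg
  have hkey : ∀ h : E, ⟪gradient f₁ v - gradient f₂ (q - v), h⟫_ℝ = 0 := by
    intro h
    have := DFunLike.congr_fun hz h
    simp only [ContinuousLinearMap.add_apply, ContinuousLinearMap.comp_apply,
      ContinuousLinearMap.neg_apply, ContinuousLinearMap.id_apply,
      ContinuousLinearMap.zero_apply, map_neg] at this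
    rw [inner_sub_left, inner_gradient_eq, inner_gradient_eq]
    linarith
  have := hkey (gradient f₁ v - gradient f₂ (q - v))
  rw [inner_self_eq_zero] at this
  exact sub_eq_zero.mp this

lemma diff_of_top {f : E → ℝ} (hf : ContDiff ℝ (⊤ : ℕ∞) f) : Differentiable ℝ f :=
  hf.differentiable (by simp)

lemma diff_fderiv_of_top {f : E → ℝ} (hf : ContDiff ℝ (⊤ : ℕ∞) f) :
    Differentiable ℝ (fderiv ℝ f) :=
  (contDiff_infty_iff_fderiv.mp hf).2.differentiable (by simp)

lemma inner_fderiv_grad {f : E → ℝ} (hf : ContDiff ℝ (⊤ : ℕ∞) f)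
    (hg : Differentiable ℝ (gradient f)) (x u v : E) :
    ⟪fderiv ℝ (gradient f) x u, v⟫_ℝ = fderiv ℝ (fderiv ℝ f) x u v := by
  have hD2 : HasFDerivAt (fderiv ℝ f) (fderiv ℝ (fderiv ℝ f) x) x :=
    ((diff_fderiv_of_top hf) x).hasFDerivAt
  have h1 : HasFDerivAt (fun y => ⟪v, gradient f y⟫_ℝ)
      ((innerSL ℝ v).comp (fderiv ℝ (gradient f) x)) x :=
    (innerSL ℝ v).hasFDerivAt.comp x ((hg x).hasFDerivAt)
  have h2 : HasFDerivAt (fun y => fderiv ℝ f y v)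
      ((ContinuousLinearMap.apply ℝ ℝ v).comp (fderiv ℝ (fderiv ℝ f) x)) x :=
    (ContinuousLinearMap.apply ℝ ℝ v).hasFDerivAt.comp x hD2
  have hfun : (fun y => ⟪v, gradient f y⟫_ℝ) = fun y => fderiv ℝ f y v := by
    funext y
    rw [real_inner_comm]
    exact inner_gradient_eq f y v
  rw [hfun] at h1
  have huniq := h1.unique h2
  have := DFunLike.congr_fun huniq u
  simpa [real_inner_comm] using this

lemma hess_symm {f : E → ℝ} (hf : ContDiff ℝ (⊤ : ℕ∞) f)
    (hg : Differentiable ℝ (gradient f)) (x u v : E) :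
    ⟪fderiv ℝ (gradient f) x u, v⟫_ℝ = ⟪fderiv ℝ (gradient f) x v, u⟫_ℝ := by
  rw [inner_fderiv_grad hf hg, inner_fderiv_grad hf hg]
  exact second_derivative_symmetric
    (fun y => ((diff_of_top hf) y).hasFDerivAt)
    (((diff_fderiv_of_top hf) x).hasFDerivAt) u v

lemma hess_psd {f : E → ℝ} (hf : ContDiff ℝ (⊤ : ℕ∞) f)
    (hg : Differentiable ℝ (gradient f)) (hconv : ConvexOn ℝ univ f) (x u : E) :
    0 ≤ ⟪fderiv ℝ (gradient f) x u, u⟫_ℝ := by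
  set B := fderiv ℝ (gradient f) x with hB
  set ρ := fun t : ℝ => ⟪u, gradient f (x + t • u)⟫_ℝ - ⟪u, gradient f x⟫_ℝ with hρ
  have hline : HasDerivAt (fun t : ℝ => x + t • u) u 0 := by
    simpa using ((hasDerivAt_id (0:ℝ)).smul_const u).const_add x
  have hgd : HasFDerivAt (gradient f) B (x + (0:ℝ) • u) := by
    simpa using (hg x).hasFDerivAt
  have hcomp : HasDerivAt (fun t : ℝ => gradient f (x + t • u)) (B u) 0 := by
    exact hgd.comp_hasDerivAt (0:ℝ) hline
  have hρd : HasDerivAt ρ ⟪u, B u⟫_ℝ 0 := by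
    have := ((innerSL ℝ u).hasFDerivAt.comp_hasDerivAt (0:ℝ) hcomp)
    simpa [hρ] using this.sub_const ⟪u, gradient f x⟫_ℝ
  have hρ0 : ρ 0 = 0 := by simp [hρ]
  have hmul : ∀ t : ℝ, 0 ≤ ρ t * t := by
    intro t
    have h0 := grad_mono hconv (diff_of_top hf) (x + t • u) x
    have he : x + t • u - x = t • u := by abel
    rw [he, real_inner_smul_right, inner_sub_left] at h0
    have e1 : ⟪u, gradient f (x + t • u)⟫_ℝ = ⟪gradient f (x + t • u), u⟫_ℝ :=
      real_inner_comm _ _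
    have e2 : ⟪u, gradient f x⟫_ℝ = ⟪gradient f x, u⟫_ℝ := real_inner_comm _ _
    simp only [hρ, e1, e2]
    nlinarith [h0]
  have hslope : ∀ t : ℝ, t ≠ 0 → 0 ≤ slope ρ 0 t := by
    intro t ht
    rw [slope_def_field, hρ0, sub_zero, sub_zero]
    rcases lt_or_gt_of_ne ht with h | h
    · have := hmul t
      have hle : ρ t ≤ 0 := by nlinarith
      exact div_nonneg_iff.mpr (Or.inr ⟨hle, h.le⟩)
    · have := hmul t
      have hge : 0 ≤ ρ t := by nlinarith
      exact div_nonneg hge h.le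
  have htend := hasDerivAt_iff_tendsto_slope.mp hρd
  have : 0 ≤ ⟪u, B u⟫_ℝ := by
    refine ge_of_tendsto htend ?_
    filter_upwards [self_mem_nhdsWithin] with t ht
    exact hslope t ht
  rwa [real_inner_comm] at this

lemma psd_kernel {B : E →L[ℝ] E} (hsym : ∀ u v, ⟪B u, v⟫_ℝ = ⟪B v, u⟫_ℝ)
    (hpsd : ∀ u, 0 ≤ ⟪B u, u⟫_ℝ) {k : E} (hk : ⟪B k, k⟫_ℝ = 0) : B k = 0 := by
  by_contra hne
  set a := B k with ha
  set C := ⟪B a, a⟫_ℝ with hC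
  have key : ∀ t : ℝ, 0 ≤ 2 * t * ‖a‖^2 + t^2 * C := by
    intro t
    have h := hpsd (k + t • a)
    have expand : ⟪B (k + t • a), k + t • a⟫_ℝ
        = ⟪B k, k⟫_ℝ + 2 * t * ‖a‖^2 + t^2 * C := by
      rw [map_add, map_smul, inner_add_left, inner_add_right, inner_add_right,
        real_inner_smul_left, real_inner_smul_right, real_inner_smul_left,
        real_inner_smul_right]
      have h1 : ⟪B a, k⟫_ℝ = ⟪B k, a⟫_ℝ := hsym a k
      have h2 : ⟪B k, a⟫_ℝ = ‖a‖^2 := by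
        rw [← ha, real_inner_self_eq_norm_sq]
      rw [h1, h2, hC]
      ring
    rw [expand, hk] at h
    linarith
  have hane : a ≠ 0 := hne
  have hs : 0 < ‖a‖^2 := by
    have := norm_pos_iff.mpr hane
    positivity
  set D := |C| + 1 with hD
  have hD0 : 0 < D := by positivity
  set s := ‖a‖^2 with hsdef
  have hkey := key (-(s / D))
  have hCD : C ≤ D := by
    rw [hD]; linarith [le_abs_self C]
  have hε : 0 < s / D := by positivity
  have h1 : 0 ≤ (s / D) * (-2 * s + (s / D) * C) := by nlinarith [hkey]
  have h2 : 0 ≤ -2 * s + (s / D) * C := by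
    by_contra hcon
    push_neg at hcon
    nlinarith [mul_pos hε (neg_pos.mpr hcon)]
  have h3 : (s / D) * C ≤ (s / D) * D := mul_le_mul_of_nonneg_left hCD hε.le
  have h4 : (s / D) * D = s := div_mul_cancel₀ s hD0.ne'
  linarith

lemma symm_deriv_psd {f : E → ℝ} {φ : E ≃ E}
    (hf : ContDiff ℝ (⊤ : ℕ∞) f) (hφ : ⇑φ = gradient f)
    (hφs : ContDiff ℝ (⊤ : ℕ∞) ⇑φ) (hφi : ContDiff ℝ (⊤ : ℕ∞) ⇑φ.symm)
    (hconv : ConvexOn ℝ univ f) (p : E) (h : E) :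
    0 ≤ ⟪fderiv ℝ (⇑φ.symm) p h, h⟫_ℝ ∧ (⟪fderiv ℝ (⇑φ.symm) p h, h⟫_ℝ = 0 → h = 0) := by
  have hg : Differentiable ℝ (gradient f) := by
    rw [← hφ]; exact hφs.differentiable (by simp)
  set x := φ.symm p with hx
  set A := fderiv ℝ (⇑φ.symm) p with hA
  set B := fderiv ℝ (gradient f) x with hB
  have hBφ : B = fderiv ℝ (⇑φ) x := by rw [hB, hφ]
  have hφd : Differentiable ℝ ⇑φ := hφs.differentiable (by simp)
  have hφid : Differentiable ℝ ⇑φ.symm := hφi.differentiable (by simp)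
  have hBA : ∀ z, B (A z) = z := by
    intro z
    have hcomp : HasFDerivAt (⇑φ ∘ ⇑φ.symm) ((fderiv ℝ ⇑φ x).comp A) p :=
      ((hφd x).hasFDerivAt).comp p ((hφid p).hasFDerivAt)
    have hid : (⇑φ ∘ ⇑φ.symm) = id := by funext z; simp
    rw [hid] at hcomp
    have huniq := hcomp.unique (hasFDerivAt_id p)
    calc B (A z) = ((fderiv ℝ ⇑φ x).comp A) z := by rw [hBφ]; rfl
      _ = z := by rw [huniq]; rfl
  have hsym := fun u v => hess_symm hf hg x u v
  have hpsd := fun u => hess_psd hf hg hconv x u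
  have hinner : ⟪A h, h⟫_ℝ = ⟪B (A h), A h⟫_ℝ := by
    calc ⟪A h, h⟫_ℝ = ⟪A h, B (A h)⟫_ℝ := by nth_rewrite 2 [← hBA h]; rfl
      _ = ⟪B (A h), A h⟫_ℝ := real_inner_comm _ _
  constructor
  · rw [hinner]; exact hpsd (A h)
  · intro h0
    rw [hinner] at h0
    have := psd_kernel hsym hpsd h0
    rw [← hBA h, this]

section FD
variable [FiniteDimensional ℝ E]

lemma eta_inv_contDiff {f₁ f₂ : E → ℝ} {φ₁ φ₂ : E ≃ E}
    (hf₁ : ContDiff ℝ (⊤ : ℕ∞) f₁) (hf₂ : ContDiff ℝ (⊤ : ℕ∞) f₂)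
    (hφ₁ : ⇑φ₁ = gradient f₁) (hφ₂ : ⇑φ₂ = gradient f₂)
    (hφ₁s : ContDiff ℝ (⊤ : ℕ∞) ⇑φ₁) (hφ₁i : ContDiff ℝ (⊤ : ℕ∞) ⇑φ₁.symm)
    (hφ₂s : ContDiff ℝ (⊤ : ℕ∞) ⇑φ₂) (hφ₂i : ContDiff ℝ (⊤ : ℕ∞) ⇑φ₂.symm)
    (hconv₁ : ConvexOn ℝ univ f₁) (hconv₂ : ConvexOn ℝ univ f₂)
    (ηe : E ≃ E) (hηe : ⇑ηe = fun p => φ₁.symm p + φ₂.symm p) :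
    ContDiff ℝ (⊤ : ℕ∞) ⇑ηe.symm := by
  have hηc : ContDiff ℝ (⊤ : ℕ∞) ⇑ηe := by rw [hηe]; exact hφ₁i.add hφ₂i
  rw [contDiff_iff_contDiffAt]
  intro q
  set p := ηe.symm q with hp
  have hq : ηe p = q := ηe.apply_symm_apply q
  set A₁ := fderiv ℝ (⇑φ₁.symm) p with hA₁
  set A₂ := fderiv ℝ (⇑φ₂.symm) p with hA₂
  have hfd : HasFDerivAt (⇑ηe) (A₁ + A₂) p := by
    rw [hηe]
    exact ((hφ₁i.differentiable (by simp) p).hasFDerivAt).add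
      ((hφ₂i.differentiable (by simp) p).hasFDerivAt)
  have hker : ∀ h : E, (A₁ + A₂) h = 0 → h = 0 := by
    intro h hh
    have h1 := symm_deriv_psd hf₁ hφ₁ hφ₁s hφ₁i hconv₁ p h
    have h2 := symm_deriv_psd hf₂ hφ₂ hφ₂s hφ₂i hconv₂ p h
    have hadd : A₁ h + A₂ h = 0 := hh
    have hsum : ⟪A₁ h, h⟫_ℝ + ⟪A₂ h, h⟫_ℝ = 0 := by
      rw [← inner_add_left, hadd, inner_zero_left]
    exact h1.2 (by linarith [h1.1, h2.1])
  have hinj : Function.Injective ⇑(A₁ + A₂) := by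
    intro a b hab
    have h0 : (A₁ + A₂) (a - b) = 0 := by rw [map_sub, hab, sub_self]
    exact sub_eq_zero.mp (hker _ h0)
  have hsurj : Function.Surjective ⇑(A₁ + A₂) :=
    LinearMap.injective_iff_surjective (f := ((A₁ + A₂ : E →L[ℝ] E) : E →ₗ[ℝ] E)) |>.mp hinj
  set M := ContinuousLinearEquiv.ofBijective (A₁ + A₂)
    (LinearMap.ker_eq_bot.mpr hinj) (LinearMap.range_eq_top.mpr hsurj) with hM
  have hMcoe : (M : E →L[ℝ] E) = A₁ + A₂ := rfl
  have hfd' : HasFDerivAt (⇑ηe) (M : E →L[ℝ] E) p := by rw [hMcoe]; exact hfd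
  have hcd : ContDiffAt ℝ (⊤ : ℕ∞) ⇑ηe p := hηc.contDiffAt
  have hlocal := hcd.to_localInverse (f' := M) hfd' (by simp)
  have hevEq : ⇑ηe.symm =ᶠ[𝓝 (ηe p)]
      (hcd.localInverse hfd' (by simp)) := by
    have hev := (hcd.hasStrictFDerivAt' hfd'
      (by simp)).eventually_right_inverse
    filter_upwards [hev] with y hy
    calc ηe.symm y = ηe.symm (ηe (((hcd.hasStrictFDerivAt' hfd'
          (by simp)).localInverse ⇑ηe M p) y)) := by rw [hy]
      _ = _ := ηe.symm_apply_apply _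
  have : ContDiffAt ℝ (⊤ : ℕ∞) ⇑ηe.symm (ηe p) :=
    hlocal.congr_of_eventuallyEq hevEq
  rwa [hq] at this

end FD

end

/-- Let f₁, f₂ : ℝⁿ → ℝ be simple (smooth, gradients being the diffeomorphisms φ₁, φ₂)
and convex.  Then for each q the function v ↦ f₁(v) + f₂(q−v) attains its infimum,
uniquely, at the point v_q characterized by ∇f₁(v_q) = ∇f₂(q − v_q); the
infimal-convolution (f₁ □ f₂)(q) = inf_v (f₁(v) + f₂(q−v)) is a finite-valued simple
and convex function, and (j¹f₁) □̲ (j¹f₂) = j¹(f₁ □ f₂). -/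
theorem stmt11 (n : ℕ) (f₁ f₂ : EuclideanSpace ℝ (Fin n) → ℝ)
    (φ₁ φ₂ : EuclideanSpace ℝ (Fin n) ≃ EuclideanSpace ℝ (Fin n))
    (hf₁ : ContDiff ℝ (⊤ : ℕ∞) f₁) (hf₂ : ContDiff ℝ (⊤ : ℕ∞) f₂)
    (hφ₁ : ⇑φ₁ = gradient f₁) (hφ₂ : ⇑φ₂ = gradient f₂)
    (hφ₁s : ContDiff ℝ (⊤ : ℕ∞) ⇑φ₁) (hφ₁i : ContDiff ℝ (⊤ : ℕ∞) ⇑φ₁.symm)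
    (hφ₂s : ContDiff ℝ (⊤ : ℕ∞) ⇑φ₂) (hφ₂i : ContDiff ℝ (⊤ : ℕ∞) ⇑φ₂.symm)
    (hconv₁ : ConvexOn ℝ Set.univ f₁) (hconv₂ : ConvexOn ℝ Set.univ f₂) :
    (∀ q, ∃ v,
      gradient f₁ v = gradient f₂ (q - v) ∧
      (∀ w, gradient f₁ w = gradient f₂ (q - w) → w = v) ∧
      (∀ w, w ≠ v → f₁ v + f₂ (q - v) < f₁ w + f₂ (q - w)) ∧
      sInf (Set.range fun v' => f₁ v' + f₂ (q - v')) = f₁ v + f₂ (q - v)) ∧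
    ContDiff ℝ (⊤ : ℕ∞) (fun q => sInf (Set.range fun v => f₁ v + f₂ (q - v))) ∧
    IsDiffeo (gradient (fun q => sInf (Set.range fun v => f₁ v + f₂ (q - v)))) ∧
    ConvexOn ℝ Set.univ (fun q => sInf (Set.range fun v => f₁ v + f₂ (q - v))) ∧
    LegConv (oneJetGraph f₁) (oneJetGraph f₂)
      = oneJetGraph (fun q => sInf (Set.range fun v => f₁ v + f₂ (q - v))) := by
  have hd₁ : Differentiable ℝ f₁ := hf₁.differentiable (by simp)
  have hd₂ : Differentiable ℝ f₂ := hf₂.differentiable (by simp)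
  set η : EuclideanSpace ℝ (Fin n) → EuclideanSpace ℝ (Fin n) :=
    fun p => φ₁.symm p + φ₂.symm p with hη
  have hgrad₁ : ∀ a, gradient f₁ (φ₁.symm a) = a := fun a => by
    rw [← hφ₁]; exact φ₁.apply_symm_apply a
  have hgrad₂ : ∀ a, gradient f₂ (φ₂.symm a) = a := fun a => by
    rw [← hφ₂]; exact φ₂.apply_symm_apply a
  have hηinj : Function.Injective η := by
    intro a b hab
    have m1 := grad_mono hconv₁ hd₁ (φ₁.symm a) (φ₁.symm b)
    have m2 := grad_mono hconv₂ hd₂ (φ₂.symm a) (φ₂.symm b)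
    rw [hgrad₁ a, hgrad₁ b] at m1
    rw [hgrad₂ a, hgrad₂ b] at m2
    have hzero : ⟪a - b, φ₁.symm a - φ₁.symm b⟫_ℝ
        + ⟪a - b, φ₂.symm a - φ₂.symm b⟫_ℝ = 0 := by
      rw [← inner_add_right]
      have hsum : (φ₁.symm a - φ₁.symm b) + (φ₂.symm a - φ₂.symm b) = η a - η b := by
        simp only [hη]; abel
      rw [hsum, hab, sub_self, inner_zero_right]
    have m1z : ⟪gradient f₁ (φ₁.symm a) - gradient f₁ (φ₁.symm b),
        φ₁.symm a - φ₁.symm b⟫_ℝ = 0 := by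
      rw [hgrad₁ a, hgrad₁ b]
      linarith
    have hfl := grad_flat hconv₁ hd₁ m1z
    rw [hgrad₁ a, hgrad₁ b] at hfl
    exact hfl.symm
  have hmin_ex : ∀ q, ∃ v, ∀ w, f₁ v + f₂ (q - v) ≤ f₁ w + f₂ (q - w) := fun q =>
    exists_min hconv₁ hconv₂ hd₁ hd₂ ⇑φ₁.symm hgrad₁ hφ₁i.continuous q
  have hcrit_eta : ∀ q w, gradient f₁ w = gradient f₂ (q - w) → η (φ₁ w) = q := by
    intro q w hw
    have h2 : φ₁ w = φ₂ (q - w) := by rw [hφ₁, hφ₂, hw]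
    simp only [hη]
    rw [φ₁.symm_apply_apply, h2, φ₂.symm_apply_apply]
    abel
  have hηsurj : Function.Surjective η := fun q => by
    obtain ⟨v, hv⟩ := hmin_ex q
    exact ⟨φ₁ v, hcrit_eta q v (crit_of_min hd₁ hd₂ hv)⟩
  set ηe : EuclideanSpace ℝ (Fin n) ≃ EuclideanSpace ℝ (Fin n) :=
    Equiv.ofBijective η ⟨hηinj, hηsurj⟩ with hηedef
  have hηecoe : ⇑ηe = η := rfl
  have hηsm : ContDiff ℝ (⊤ : ℕ∞) ⇑ηe := by
    rw [hηecoe, hη]; exact hφ₁i.add hφ₂i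
  have hinv : ContDiff ℝ (⊤ : ℕ∞) ⇑ηe.symm :=
    eta_inv_contDiff hf₁ hf₂ hφ₁ hφ₂ hφ₁s hφ₁i hφ₂s hφ₂i hconv₁ hconv₂ ηe hηecoe
  set V : EuclideanSpace ℝ (Fin n) → EuclideanSpace ℝ (Fin n) :=
    fun q => φ₁.symm (ηe.symm q) with hVdef
  have hVs : ContDiff ℝ (⊤ : ℕ∞) V := hφ₁i.comp hinv
  have hetaP : ∀ q, φ₁.symm (ηe.symm q) + φ₂.symm (ηe.symm q) = q := fun q =>
    ηe.apply_symm_apply q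
  have hsubV : ∀ q, q - V q = φ₂.symm (ηe.symm q) := fun q =>
    sub_eq_of_eq_add' (hetaP q).symm
  have hgradV : ∀ q, gradient f₁ (V q) = ηe.symm q := fun q => hgrad₁ _
  have hgradQ : ∀ q, gradient f₂ (q - V q) = ηe.symm q := fun q => by
    rw [hsubV q]; exact hgrad₂ _
  have hcrit : ∀ q, gradient f₁ (V q) = gradient f₂ (q - V q) := fun q => by
    rw [hgradV, hgradQ]
  have huniq : ∀ q w, gradient f₁ w = gradient f₂ (q - w) → w = V q := by
    intro q w hw
    have h1 : η (φ₁ w) = q := hcrit_eta q w hw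
    have h2 : η (ηe.symm q) = q := hetaP q
    have h3 : φ₁ w = ηe.symm q := hηinj (h1.trans h2.symm)
    calc w = φ₁.symm (φ₁ w) := (φ₁.symm_apply_apply w).symm
      _ = V q := by rw [h3]
  have hminV : ∀ q w, f₁ (V q) + f₂ (q - V q) ≤ f₁ w + f₂ (q - w) := by
    intro q w
    obtain ⟨v₀, hv₀⟩ := hmin_ex q
    have hveq : v₀ = V q := huniq q v₀ (crit_of_min hd₁ hd₂ hv₀)
    rw [← hveq]
    exact hv₀ w
  have hsinf : ∀ q, sInf (Set.range fun v' => f₁ v' + f₂ (q - v'))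
      = f₁ (V q) + f₂ (q - V q) := by
    intro q
    apply IsLeast.csInf_eq
    exact ⟨⟨V q, rfl⟩, by rintro y ⟨w, rfl⟩; exact hminV q w⟩
  have hFeq : (fun q => sInf (Set.range fun v => f₁ v + f₂ (q - v)))
      = fun q => f₁ (V q) + f₂ (q - V q) := funext hsinf
  have hVd : Differentiable ℝ V := hVs.differentiable (by simp)
  have hgradFat : ∀ q, HasGradientAt
      (fun z => f₁ (V z) + f₂ (z - V z)) (ηe.symm q) q := by
    intro q
    have hVq : HasFDerivAt V (fderiv ℝ V q) q := (hVd q).hasFDerivAt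
    have h1 : HasFDerivAt (fun z => f₁ (V z))
        ((fderiv ℝ f₁ (V q)).comp (fderiv ℝ V q)) q :=
      (hd₁ (V q)).hasFDerivAt.comp q hVq
    have hsub' : HasFDerivAt (fun z : EuclideanSpace ℝ (Fin n) => z - V z)
        (ContinuousLinearMap.id ℝ (EuclideanSpace ℝ (Fin n)) - fderiv ℝ V q) q :=
      (hasFDerivAt_id q).sub hVq
    have h2 : HasFDerivAt (fun z => f₂ (z - V z))
        ((fderiv ℝ f₂ (q - V q)).comp
          (ContinuousLinearMap.id ℝ (EuclideanSpace ℝ (Fin n)) - fderiv ℝ V q)) q :=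
      (hd₂ (q - V q)).hasFDerivAt.comp q hsub'
    have hS := h1.add h2
    have hDeq : (fderiv ℝ f₁ (V q)).comp (fderiv ℝ V q)
        + (fderiv ℝ f₂ (q - V q)).comp
          (ContinuousLinearMap.id ℝ (EuclideanSpace ℝ (Fin n)) - fderiv ℝ V q)
        = InnerProductSpace.toDual ℝ (EuclideanSpace ℝ (Fin n)) (ηe.symm q) := by
      ext h
      simp only [ContinuousLinearMap.add_apply, ContinuousLinearMap.comp_apply,
        ContinuousLinearMap.sub_apply, ContinuousLinearMap.id_apply,
        InnerProductSpace.toDual_apply_apply]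
      rw [← inner_gradient_eq f₁, ← inner_gradient_eq f₂, hgradV q, hgradQ q,
        ← inner_add_right]
      congr 1
      abel
    exact hasGradientAt_iff_hasFDerivAt.mpr (hDeq ▸ hS)
  have hgradF : gradient (fun q => sInf (Set.range fun v => f₁ v + f₂ (q - v)))
      = ⇑ηe.symm := by
    rw [hFeq]
    funext q
    exact (hgradFat q).gradient
  refine ⟨?_, ?_, ?_, ?_, ?_⟩
  · intro q
    refine ⟨V q, hcrit q, fun w hw => huniq q w hw, ?_, hsinf q⟩
    intro w hwne
    rcases eq_or_lt_of_le (hminV q w) with heq | hlt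
    · exfalso
      apply hwne
      apply huniq q w
      apply crit_of_min hd₁ hd₂
      intro z
      rw [← heq]
      exact hminV q z
    · exact hlt
  · rw [hFeq]
    exact (hf₁.comp hVs).add (hf₂.comp (contDiff_id.sub hVs))
  · refine ⟨ηe.symm, hgradF.symm, hinv, ?_⟩
    rw [Equiv.symm_symm]
    exact hηsm
  · rw [hFeq]
    refine ⟨convex_univ, ?_⟩
    intro q _ q' _ a b ha hb hab
    have key : (a • q + b • q') - (a • V q + b • V q')
        = a • (q - V q) + b • (q' - V q') := by module
    calc f₁ (V (a • q + b • q')) + f₂ ((a • q + b • q') - V (a • q + b • q'))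
        ≤ f₁ (a • V q + b • V q')
          + f₂ ((a • q + b • q') - (a • V q + b • V q')) := hminV _ _
      _ = f₁ (a • V q + b • V q') + f₂ (a • (q - V q) + b • (q' - V q')) := by rw [key]
      _ ≤ (a * f₁ (V q) + b * f₁ (V q'))
          + (a * f₂ (q - V q) + b * f₂ (q' - V q')) := by
        have c1 := hconv₁.2 (mem_univ (V q)) (mem_univ (V q')) ha hb hab
        have c2 := hconv₂.2 (mem_univ (q - V q)) (mem_univ (q' - V q')) ha hb hab
        simp only [smul_eq_mul] at c1 c2
        linarith
      _ = a • (f₁ (V q) + f₂ (q - V q)) + b • (f₁ (V q') + f₂ (q' - V q')) := by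
        simp only [smul_eq_mul]
        ring
  · ext x
    constructor
    · rintro ⟨u₁, q₁, u₂, q₂, p, ⟨a, ha⟩, ⟨b, hb⟩, rfl⟩
      simp only [Prod.mk.injEq] at ha hb
      obtain ⟨hu₁, hq₁, hp₁⟩ := ha
      obtain ⟨hu₂, hq₂, hp₂⟩ := hb
      subst hq₁ hq₂ hu₁ hu₂ hp₁
      refine ⟨q₁ + q₂, ?_⟩
      have hc : gradient f₁ q₁ = gradient f₂ (q₁ + q₂ - q₁) := by
        rw [add_sub_cancel_left, ← hp₂]
      have hVQ : q₁ = V (q₁ + q₂) := huniq (q₁ + q₂) q₁ hc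
      have hval : sInf (Set.range fun v => f₁ v + f₂ (q₁ + q₂ - v)) = f₁ q₁ + f₂ q₂ := by
        rw [hsinf, ← hVQ, add_sub_cancel_left]
      have hgr : gradient (fun q => sInf (Set.range fun v => f₁ v + f₂ (q - v))) (q₁ + q₂)
          = gradient f₁ q₁ := by
        rw [hgradF, ← hgradV (q₁ + q₂), ← hVQ]
      rw [Prod.ext_iff, Prod.ext_iff]
      exact ⟨hval.symm, rfl, by rw [hgr]⟩
    · rintro ⟨Q, rfl⟩
      refine ⟨f₁ (V Q), V Q, f₂ (Q - V Q), Q - V Q, ηe.symm Q,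
        ⟨V Q, ?_⟩, ⟨Q - V Q, ?_⟩, ?_⟩
      · rw [hgradV]
      · rw [hgradQ]
      · rw [Prod.ext_iff, Prod.ext_iff]
        refine ⟨hsinf Q, by module, ?_⟩
        rw [hgradF]
end
end

section
/- Let G : ℝⁿ × ℝᵏ → ℝ be a globally simple generating function, i.e. (1) for every q ∈ ℝⁿ, the partial gradient map w ↦ ∇_w G(q,w) is a diffeomorphism of ℝᵏ, and (2) the full gradient ∇G is a diffeomorphism of ℝⁿ × ℝᵏ. Then G_T : ℝⁿ × (ℝⁿ × ℝᵏ) → ℝ defined by G_T(q,(v,w)) := ⟨q,v⟩ − G(v,w), with base variable q and fiber variables (v,w), is also a globally simple generating function: for every q the map (v,w) ↦ ∇_{(v,w)} G_T(q,(v,w)) is a diffeomorphism of ℝⁿ × ℝᵏ, and ∇G_T is a diffeomorphism of ℝⁿ × ℝⁿ × ℝᵏ. -/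
noncomputable section

open InnerProductSpace Topology ContinuousLinearMap

lemma hone' : ((⊤ : ℕ∞) : WithTop ℕ∞) ≠ 0 := by simp

lemma IsDiffeo.comp {X : Type*} [NormedAddCommGroup X] [NormedSpace ℝ X] {f g : X → X}
    (hf : IsDiffeo f) (hg : IsDiffeo g) : IsDiffeo (fun x => f (g x)) := by
  obtain ⟨e, he, h1, h2⟩ := hf
  obtain ⟨e', he', h1', h2'⟩ := hg
  refine ⟨e'.trans e, ?_, ?_, ?_⟩
  · funext x; simp [he, he']
  · rw [Equiv.coe_trans]; exact h1.comp h1'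
  · have : ⇑(e'.trans e).symm = ⇑e'.symm ∘ ⇑e.symm := rfl
    rw [this]; exact h2'.comp h2

variable {F : Type*} [NormedAddCommGroup F] [InnerProductSpace ℝ F] [CompleteSpace F]

lemma hasGradientAt_inner_sub (q : F) {g : F → ℝ} {v : F} (hg : DifferentiableAt ℝ g v) :
    HasGradientAt (fun v' => (inner ℝ q v' : ℝ) - g v') (q - gradient g v) v := by
  rw [hasGradientAt_iff_hasFDerivAt, map_sub]
  have hq : HasFDerivAt (fun v' => (inner ℝ q v' : ℝ)) (toDual ℝ F q) v :=
    ((toDual ℝ F q).hasFDerivAt (x := v)).congr_of_eventuallyEq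
      (Filter.Eventually.of_forall fun x => (toDual_apply_apply (𝕜 := ℝ) (x := q) (y := x)).symm)
  exact hq.sub hg.hasGradientAt.hasFDerivAt

lemma hasGradientAt_const_sub (c : ℝ) {g : F → ℝ} {w : F} (hg : DifferentiableAt ℝ g w) :
    HasGradientAt (fun w' => c - g w') (-(gradient g w)) w := by
  rw [hasGradientAt_iff_hasFDerivAt, map_neg]
  exact hg.hasGradientAt.hasFDerivAt.const_sub c

lemma hasGradientAt_inner_right_sub_const (v : F) (c : ℝ) (q : F) :
    HasGradientAt (fun q' => (inner ℝ q' v : ℝ) - c) v q := by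
  have heq : (fun q' => (inner ℝ q' v : ℝ) - c) = fun q' => (inner ℝ v q' : ℝ) - c := by
    funext q'; rw [real_inner_comm]
  rw [heq, hasGradientAt_iff_hasFDerivAt]
  have h : HasFDerivAt (fun q' => (inner ℝ v q' : ℝ)) (toDual ℝ F v) q :=
    ((toDual ℝ F v).hasFDerivAt (x := q)).congr_of_eventuallyEq
      (Filter.Eventually.of_forall fun x => (toDual_apply_apply (𝕜 := ℝ) (x := v) (y := x)).symm)
  exact h.sub_const c

/-- fderiv of a smooth diffeomorphism is invertible (two-sided). -/
lemma diffeo_fderiv_comp {Y : Type*} [NormedAddCommGroup Y] [NormedSpace ℝ Y]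
    (e : Y ≃ Y) (he : ContDiff ℝ (⊤ : ℕ∞) ⇑e) (he' : ContDiff ℝ (⊤ : ℕ∞) ⇑e.symm) (w : Y) :
    (fderiv ℝ ⇑e.symm (e w)).comp (fderiv ℝ ⇑e w) = ContinuousLinearMap.id ℝ Y ∧
    (fderiv ℝ ⇑e w).comp (fderiv ℝ ⇑e.symm (e w)) = ContinuousLinearMap.id ℝ Y := by
  have hde : DifferentiableAt ℝ ⇑e w := (he.differentiable hone').differentiableAt
  have hde' : DifferentiableAt ℝ ⇑e.symm (e w) := (he'.differentiable hone').differentiableAt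
  constructor
  · have h1 : HasFDerivAt (⇑e.symm ∘ ⇑e) ((fderiv ℝ ⇑e.symm (e w)).comp (fderiv ℝ ⇑e w)) w :=
      hde'.hasFDerivAt.comp w hde.hasFDerivAt
    rw [Equiv.symm_comp_self] at h1
    exact h1.unique (hasFDerivAt_id w)
  · have h2 : HasFDerivAt (⇑e ∘ ⇑e.symm)
        ((fderiv ℝ ⇑e (e.symm (e w))).comp (fderiv ℝ ⇑e.symm (e w))) (e w) :=
      ((he.differentiable hone') (e.symm (e w))).hasFDerivAt.comp (e w) hde'.hasFDerivAt
    rw [Equiv.self_comp_symm] at h2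
    rw [e.symm_apply_apply] at h2
    exact h2.unique (hasFDerivAt_id (e w))

/-- Global inverse function theorem: a smooth bijection with everywhere invertible
derivative has a smooth inverse. -/
lemma smooth_global_inverse {E : Type*} [NormedAddCommGroup E] [NormedSpace ℝ E]
    [CompleteSpace E] (e : E ≃ E) (hf : ContDiff ℝ (⊤ : ℕ∞) ⇑e)
    (hd : ∀ x, ∃ L : E ≃L[ℝ] E, HasFDerivAt ⇑e (L : E →L[ℝ] E) x) :
    ContDiff ℝ (⊤ : ℕ∞) ⇑e.symm := by
  rw [contDiff_iff_contDiffAt]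
  intro y
  obtain ⟨L, hL⟩ := hd (e.symm y)
  have hca : ContDiffAt ℝ (⊤ : ℕ∞) ⇑e (e.symm y) := hf.contDiffAt
  have hloc : ContDiffAt ℝ (⊤ : ℕ∞) (hca.localInverse hL hone') (e (e.symm y)) :=
    hca.to_localInverse hL hone'
  rw [e.apply_symm_apply] at hloc
  apply hloc.congr_of_eventuallyEq
  have hev := (hca.hasStrictFDerivAt' hL hone').eventually_right_inverse
  rw [e.apply_symm_apply] at hev
  filter_upwards [hev] with z hz
  have h := congrArg ⇑e.symm hz
  rw [e.symm_apply_apply] at h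
  exact h.symm

/-- Let G : ℝⁿ × ℝᵏ → ℝ be a globally simple generating function:
(1) for every q, w ↦ ∇_w G(q,w) is a diffeomorphism of ℝᵏ, and
(2) the full gradient ∇G = (∇_q G, ∇_w G) is a diffeomorphism of ℝⁿ × ℝᵏ.
Then G_T(q,(v,w)) = ⟨q,v⟩ − G(v,w), with base variable q and fiber variables (v,w), is
also globally simple: for every q the fiber gradient map
(v,w) ↦ ∇_{(v,w)} G_T(q,(v,w)) is a diffeomorphism of ℝⁿ × ℝᵏ, and the full gradient
∇G_T is a diffeomorphism of ℝⁿ × ℝⁿ × ℝᵏ. -/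
theorem stmt17 (n k : ℕ)
    (G : EuclideanSpace ℝ (Fin n) × EuclideanSpace ℝ (Fin k) → ℝ)
    (hG : ContDiff ℝ (⊤ : ℕ∞) G)
    (hfib : ∀ q, IsDiffeo (fun w => gradient (fun w' => G (q, w')) w))
    (hfull : IsDiffeo (fun x : EuclideanSpace ℝ (Fin n) × EuclideanSpace ℝ (Fin k) =>
      (gradient (fun q' => G (q', x.2)) x.1, gradient (fun w' => G (x.1, w')) x.2))) :
    (∀ q, IsDiffeo (fun x : EuclideanSpace ℝ (Fin n) × EuclideanSpace ℝ (Fin k) =>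
      (gradient (fun v' => (inner ℝ q v' : ℝ) - G (v', x.2)) x.1,
       gradient (fun w' => (inner ℝ q x.1 : ℝ) - G (x.1, w')) x.2))) ∧
    IsDiffeo (fun x : EuclideanSpace ℝ (Fin n) ×
        EuclideanSpace ℝ (Fin n) × EuclideanSpace ℝ (Fin k) =>
      (gradient (fun q' => (inner ℝ q' x.2.1 : ℝ) - G (x.2.1, x.2.2)) x.1,
       gradient (fun v' => (inner ℝ x.1 v' : ℝ) - G (v', x.2.2)) x.2.1,
       gradient (fun w' => (inner ℝ x.1 x.2.1 : ℝ) - G (x.2.1, w')) x.2.2)) := by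
  classical
  have hpart1 : ∀ w : EuclideanSpace ℝ (Fin k),
      Differentiable ℝ (fun v' : EuclideanSpace ℝ (Fin n) => G (v', w)) := by
    intro w
    have h : ContDiff ℝ (⊤ : ℕ∞) (fun v' : EuclideanSpace ℝ (Fin n) => G (v', w)) :=
      hG.comp (contDiff_prodMk_left w)
    exact h.differentiable hone'
  have hpart2 : ∀ v : EuclideanSpace ℝ (Fin n),
      Differentiable ℝ (fun w' : EuclideanSpace ℝ (Fin k) => G (v, w')) := by
    intro v
    have h : ContDiff ℝ (⊤ : ℕ∞) (fun w' : EuclideanSpace ℝ (Fin k) => G (v, w')) :=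
      hG.comp (contDiff_prodMk_right v)
    exact h.differentiable hone'
  set Φ : EuclideanSpace ℝ (Fin n) × EuclideanSpace ℝ (Fin k) →
      EuclideanSpace ℝ (Fin n) × EuclideanSpace ℝ (Fin k) := fun x =>
      (gradient (fun q' => G (q', x.2)) x.1, gradient (fun w' => G (x.1, w')) x.2) with hΦdef
  obtain ⟨eΦ, heΦ, hΦs, hΦs'⟩ := hfull
  have hfullD : IsDiffeo Φ := ⟨eΦ, heΦ, hΦs, hΦs'⟩
  have hΦ : ContDiff ℝ (⊤ : ℕ∞) Φ := heΦ ▸ hΦs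
  set Φ₂ : EuclideanSpace ℝ (Fin n) × EuclideanSpace ℝ (Fin k) → EuclideanSpace ℝ (Fin k) :=
    fun x => (Φ x).2 with hΦ₂def
  have hΦ₂ : ContDiff ℝ (⊤ : ℕ∞) Φ₂ := contDiff_snd.comp hΦ
  set Φ₁ : EuclideanSpace ℝ (Fin n) × EuclideanSpace ℝ (Fin k) → EuclideanSpace ℝ (Fin n) :=
    fun x => (Φ x).1 with hΦ₁def
  have hΦ₁ : ContDiff ℝ (⊤ : ℕ∞) Φ₁ := contDiff_fst.comp hΦ
  constructor
  · -- fiber part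
    intro q
    have hinv : Function.LeftInverse
        (fun p : EuclideanSpace ℝ (Fin n) × EuclideanSpace ℝ (Fin k) => (q - p.1, -p.2))
        (fun p : EuclideanSpace ℝ (Fin n) × EuclideanSpace ℝ (Fin k) => (q - p.1, -p.2)) := by
      intro p; simp
    have hA : IsDiffeo
        (fun p : EuclideanSpace ℝ (Fin n) × EuclideanSpace ℝ (Fin k) => (q - p.1, -p.2)) := by
      refine ⟨⟨_, _, hinv, hinv⟩, rfl, ?_, ?_⟩ <;>
        exact (contDiff_const.sub contDiff_fst).prodMk contDiff_snd.neg
    have heqf : (fun x : EuclideanSpace ℝ (Fin n) × EuclideanSpace ℝ (Fin k) =>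
        (gradient (fun v' => (inner ℝ q v' : ℝ) - G (v', x.2)) x.1,
         gradient (fun w' => (inner ℝ q x.1 : ℝ) - G (x.1, w')) x.2)) =
        fun x => (fun p : EuclideanSpace ℝ (Fin n) × EuclideanSpace ℝ (Fin k) =>
          (q - p.1, -p.2)) (Φ x) := by
      funext x
      have h1 := (hasGradientAt_inner_sub q ((hpart1 x.2).differentiableAt (x := x.1))).gradient
      have h2 := (hasGradientAt_const_sub ((inner ℝ q x.1 : ℝ))
        ((hpart2 x.1).differentiableAt (x := x.2))).gradient
      rw [h1, h2]
    rw [heqf]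
    exact hA.comp hfullD
  · -- full part
    have hfe : ∀ v : EuclideanSpace ℝ (Fin n), ∃ e : EuclideanSpace ℝ (Fin k) ≃
        EuclideanSpace ℝ (Fin k), (⇑e = fun w => Φ₂ (v, w)) ∧
        ContDiff ℝ (⊤ : ℕ∞) ⇑e ∧ ContDiff ℝ (⊤ : ℕ∞) ⇑e.symm := by
      intro v
      obtain ⟨e, hc, h2, h3⟩ := hfib v
      exact ⟨e, by funext w; rw [congrFun hc w], h2, h3⟩
    choose efib hfe1 hfe2 hfe3 using hfe
    set M : EuclideanSpace ℝ (Fin n) × EuclideanSpace ℝ (Fin k) →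
        EuclideanSpace ℝ (Fin n) × EuclideanSpace ℝ (Fin k) :=
      fun p => (p.1, Φ₂ p) with hMdef
    have hMs : ContDiff ℝ (⊤ : ℕ∞) M := contDiff_fst.prodMk hΦ₂
    set eM : (EuclideanSpace ℝ (Fin n) × EuclideanSpace ℝ (Fin k)) ≃
        (EuclideanSpace ℝ (Fin n) × EuclideanSpace ℝ (Fin k)) :=
      { toFun := M
        invFun := fun p => (p.1, (efib p.1).symm p.2)
        left_inv := by
          rintro ⟨v, w⟩
          show (v, (efib v).symm (Φ₂ (v, w))) = (v, w)
          rw [show Φ₂ (v, w) = efib v w from (congrFun (hfe1 v) w).symm,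
            Equiv.symm_apply_apply]
        right_inv := by
          rintro ⟨v, b⟩
          show (v, Φ₂ (v, (efib v).symm b)) = (v, b)
          rw [show Φ₂ (v, (efib v).symm b) = efib v ((efib v).symm b) from
            (congrFun (hfe1 v) _).symm, Equiv.apply_symm_apply] } with heMdef
    have hd : ∀ p : EuclideanSpace ℝ (Fin n) × EuclideanSpace ℝ (Fin k),
        ∃ L : (EuclideanSpace ℝ (Fin n) × EuclideanSpace ℝ (Fin k)) ≃L[ℝ]
          (EuclideanSpace ℝ (Fin n) × EuclideanSpace ℝ (Fin k)),
        HasFDerivAt ⇑eM (L : (EuclideanSpace ℝ (Fin n) × EuclideanSpace ℝ (Fin k)) →L[ℝ]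
          (EuclideanSpace ℝ (Fin n) × EuclideanSpace ℝ (Fin k))) p := by
      rintro ⟨v, w⟩
      have hΦ₂dAt : DifferentiableAt ℝ Φ₂ (v, w) :=
        (hΦ₂.differentiable hone').differentiableAt
      set D := fderiv ℝ Φ₂ (v, w) with hDdef
      set B : EuclideanSpace ℝ (Fin k) →L[ℝ] EuclideanSpace ℝ (Fin k) :=
        D.comp (ContinuousLinearMap.inr ℝ _ _) with hBdef
      have hBder : HasFDerivAt (fun w' => Φ₂ (v, w')) B w :=
        hΦ₂dAt.hasFDerivAt.comp w (hasFDerivAt_prodMk_right v w)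
      have hfeB : fderiv ℝ ⇑(efib v) w = B := by
        rw [hfe1 v]; exact hBder.fderiv
      obtain ⟨hc1, hc2⟩ := diffeo_fderiv_comp (efib v) (hfe2 v) (hfe3 v) w
      rw [hfeB] at hc1 hc2
      set B' := fderiv ℝ ⇑(efib v).symm (efib v w) with hB'def
      have key1 : ∀ δ, B' (B δ) = δ := fun δ =>
        congrFun (congrArg DFunLike.coe hc1) δ
      have key2 : ∀ δ, B (B' δ) = δ := fun δ =>
        congrFun (congrArg DFunLike.coe hc2) δ
      set DM := (ContinuousLinearMap.fst ℝ (EuclideanSpace ℝ (Fin n))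
        (EuclideanSpace ℝ (Fin k))).prod D with hDMdef
      set N := (ContinuousLinearMap.fst ℝ (EuclideanSpace ℝ (Fin n))
          (EuclideanSpace ℝ (Fin k))).prod
        (B'.comp ((ContinuousLinearMap.snd ℝ _ _) -
          D.comp ((ContinuousLinearMap.inl ℝ _ _).comp
            (ContinuousLinearMap.fst ℝ _ _)))) with hNdef
      have hNl : Function.LeftInverse N DM := by
        rintro ⟨δv, δw⟩
        show (δv, B' (D (δv, δw) - D (δv, 0))) = (δv, δw)
        have h1 : D (δv, δw) - D (δv, 0) = D (0, δw) := by
          rw [← map_sub]; congr 1 <;> simp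
        have h2 : D (0, δw) = B δw := by simp [hBdef]
        rw [h1, h2, key1]
      have hNr : Function.RightInverse N DM := by
        rintro ⟨δv, δb⟩
        show (δv, D (δv, B' (δb - D (δv, 0)))) = (δv, δb)
        have h1 : D (δv, B' (δb - D (δv, 0))) =
            D (δv, 0) + D (0, B' (δb - D (δv, 0))) := by
          rw [← map_add]; congr 1 <;> simp
        have h2 : D (0, B' (δb - D (δv, 0))) = B (B' (δb - D (δv, 0))) := by simp [hBdef]
        rw [h1, h2, key2]
        simp
      refine ⟨ContinuousLinearEquiv.equivOfInverse DM N hNl hNr, ?_⟩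
      show HasFDerivAt M DM (v, w)
      exact hasFDerivAt_fst.prodMk hΦ₂dAt.hasFDerivAt
    have hMsymm : ContDiff ℝ (⊤ : ℕ∞) ⇑eM.symm := smooth_global_inverse eM hMs hd
    set T : EuclideanSpace ℝ (Fin n) × EuclideanSpace ℝ (Fin n) × EuclideanSpace ℝ (Fin k) →
        EuclideanSpace ℝ (Fin n) × EuclideanSpace ℝ (Fin n) × EuclideanSpace ℝ (Fin k) :=
      fun x => (x.2.1, x.1 - Φ₁ x.2, -Φ₂ x.2) with hTdef
    set Tinv : EuclideanSpace ℝ (Fin n) × EuclideanSpace ℝ (Fin n) × EuclideanSpace ℝ (Fin k) →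
        EuclideanSpace ℝ (Fin n) × EuclideanSpace ℝ (Fin n) × EuclideanSpace ℝ (Fin k) :=
      fun y => (y.2.1 + Φ₁ (eM.symm (y.1, -y.2.2)), eM.symm (y.1, -y.2.2)) with hTinvdef
    have hTl : Function.LeftInverse Tinv T := by
      rintro ⟨q, v, w⟩
      show (q - Φ₁ (v, w) + Φ₁ (eM.symm (v, - -Φ₂ (v, w))), eM.symm (v, - -Φ₂ (v, w))) =
        (q, v, w)
      rw [neg_neg]
      have heq : eM.symm (v, Φ₂ (v, w)) = (v, w) := eM.symm_apply_apply (v, w)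
      rw [heq, sub_add_cancel]
    have hTr : Function.RightInverse Tinv T := by
      rintro ⟨v, c, b⟩
      have hp : eM (eM.symm (v, -b)) = (v, -b) := eM.apply_symm_apply (v, -b)
      have hp1 : (eM.symm (v, -b)).1 = v := congrArg Prod.fst hp
      have hp2 : Φ₂ (eM.symm (v, -b)) = -b := congrArg Prod.snd hp
      show ((eM.symm (v, -b)).1, c + Φ₁ (eM.symm (v, -b)) - Φ₁ (eM.symm (v, -b)),
        -Φ₂ (eM.symm (v, -b))) = (v, c, b)
      rw [hp1, hp2, add_sub_cancel_right, neg_neg]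
    have hTs : ContDiff ℝ (⊤ : ℕ∞) T :=
      (contDiff_fst.comp contDiff_snd).prodMk
        ((contDiff_fst.sub (hΦ₁.comp contDiff_snd)).prodMk ((hΦ₂.comp contDiff_snd).neg))
    have hg : ContDiff ℝ (⊤ : ℕ∞) (fun y :
        EuclideanSpace ℝ (Fin n) × EuclideanSpace ℝ (Fin n) × EuclideanSpace ℝ (Fin k) =>
        (eM.symm (y.1, -y.2.2) : EuclideanSpace ℝ (Fin n) × EuclideanSpace ℝ (Fin k))) :=
      hMsymm.comp (contDiff_fst.prodMk (contDiff_snd.comp contDiff_snd).neg)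
    have hTinvs : ContDiff ℝ (⊤ : ℕ∞) Tinv :=
      ((contDiff_fst.comp contDiff_snd).add (hΦ₁.comp hg)).prodMk hg
    refine ⟨⟨T, Tinv, hTl, hTr⟩, ?_, hTs, hTinvs⟩
    funext x
    obtain ⟨q, v, w⟩ := x
    have h1 := (hasGradientAt_inner_right_sub_const v (G (v, w)) q).gradient
    have h2 := (hasGradientAt_inner_sub q ((hpart1 w).differentiableAt (x := v))).gradient
    have h3 := (hasGradientAt_const_sub ((inner ℝ q v : ℝ))
      ((hpart2 v).differentiableAt (x := w))).gradient
    show (v, q - Φ₁ (v, w), -Φ₂ (v, w)) =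
      (gradient (fun q' => (inner ℝ q' v : ℝ) - G (v, w)) q,
       gradient (fun v' => (inner ℝ q v' : ℝ) - G (v', w)) v,
       gradient (fun w' => (inner ℝ q v : ℝ) - G (v, w')) w)
    rw [h1, h2, h3]
end
end
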